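/- Let U ⊆ ℂ be open, let F, G : U → ℂ be holomorphic with G nowhere zero, and define x(u+iv) = (Re h₁, Im h₁, Re h₃) where h₁' = F and h₃' = −F/G. Then at every z₀ ∈ U with F(z₀) ≠ 0: g₁₁ = g₂₂ = |F(z₀)|², g₁₂ = 0, and the isotropic Gaussian curvature is K(z₀) = −|G'(z₀)/(F(z₀)·G(z₀)²)|². -/

import Mathlib

noncomputable section

/-- Partial derivative of a map on ℂ ≅ ℝ² in the u-direction (real direction 1). -/
def du {E : Type*} [NormedAddCommGroup E] [NormedSpace ℝ E]
    (f : ℂ → E) : ℂ → E := fun z => fderiv ℝ f z 1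

/-- Partial derivative of a map on ℂ ≅ ℝ² in the v-direction (direction i). -/
def dv {E : Type*} [NormedAddCommGroup E] [NormedSpace ℝ E]
    (f : ℂ → E) : ℂ → E := fun z => fderiv ℝ f z Complex.I

/-- The degenerate simply isotropic inner product on ℝ³: ⟨u,v⟩ = u₁v₁ + u₂v₂. -/
def isoInner (a b : ℝ × ℝ × ℝ) : ℝ := a.1 * b.1 + a.2.1 * b.2.1

/-- The Euclidean dot product on ℝ³. -/
def dot3 (a b : ℝ × ℝ × ℝ) : ℝ := a.1 * b.1 + a.2.1 * b.2.1 + a.2.2 * b.2.2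

/-- The Euclidean cross product on ℝ³. -/
def cross3 (a b : ℝ × ℝ × ℝ) : ℝ × ℝ × ℝ :=
  (a.2.1 * b.2.2 - a.2.2 * b.2.1, a.2.2 * b.1 - a.1 * b.2.2, a.1 * b.2.1 - a.2.1 * b.1)

/-- First fundamental form coefficients (isotropic metric) of x : ℂ → ℝ³. -/
def g11 (x : ℂ → ℝ × ℝ × ℝ) (z : ℂ) : ℝ := isoInner (du x z) (du x z)
def g12 (x : ℂ → ℝ × ℝ × ℝ) (z : ℂ) : ℝ := isoInner (du x z) (dv x z)
def g22 (x : ℂ → ℝ × ℝ × ℝ) (z : ℂ) : ℝ := isoInner (dv x z) (dv x z)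

/-- The minimal normal: the unique vector of the form (n₁,n₂,1) Euclidean-orthogonal to
x_u and x_v (obtained by normalizing the cross product so its third component is 1). -/
def Nm (x : ℂ → ℝ × ℝ × ℝ) (z : ℂ) : ℝ × ℝ × ℝ :=
  ((cross3 (du x z) (dv x z)).1 / (cross3 (du x z) (dv x z)).2.2,
   (cross3 (du x z) (dv x z)).2.1 / (cross3 (du x z) (dv x z)).2.2, 1)

/-- Second fundamental form coefficients with respect to the minimal normal. -/
def h11 (x : ℂ → ℝ × ℝ × ℝ) (z : ℂ) : ℝ := dot3 (du (du x) z) (Nm x z)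
def h12 (x : ℂ → ℝ × ℝ × ℝ) (z : ℂ) : ℝ := dot3 (du (dv x) z) (Nm x z)
def h22 (x : ℂ → ℝ × ℝ × ℝ) (z : ℂ) : ℝ := dot3 (dv (dv x) z) (Nm x z)

/-- The isotropic Gaussian curvature. -/
def Kcurv (x : ℂ → ℝ × ℝ × ℝ) (z : ℂ) : ℝ :=
  (h11 x z * h22 x z - (h12 x z) ^ 2) / (g11 x z * g22 x z - (g12 x z) ^ 2)

/-- The isotropic mean curvature. -/
def meanH (x : ℂ → ℝ × ℝ × ℝ) (z : ℂ) : ℝ :=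
  (g11 x z * h22 x z - 2 * g12 x z * h12 x z + g22 x z * h11 x z) /
    (2 * (g11 x z * g22 x z - (g12 x z) ^ 2))

def mcD (c : ℂ) : ℂ →L[ℝ] ℂ :=
  ((1 : ℂ →L[ℂ] ℂ).smulRight c).restrictScalars ℝ

def LmapD (c d : ℂ) : ℂ →L[ℝ] ℝ × ℝ × ℝ :=
  (Complex.reCLM.comp (mcD c)).prod ((Complex.imCLM.comp (mcD c)).prod (Complex.reCLM.comp (mcD d)))

lemma LmapD_apply (c d v : ℂ) : LmapD c d v = ((v*c).re, (v*c).im, (v*d).re) := rfl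

lemma hasFDerivAt_E {f g : ℂ → ℂ} {c d : ℂ} {z : ℂ}
    (hf : HasDerivAt f c z) (hg : HasDerivAt g d z) :
    HasFDerivAt (fun w => ((f w).re, (f w).im, (g w).re)) (LmapD c d) z := by
  have hf' : HasFDerivAt f (mcD c) z := hf.hasFDerivAt.restrictScalars ℝ
  have hg' : HasFDerivAt g (mcD d) z := hg.hasFDerivAt.restrictScalars ℝ
  exact (HasFDerivAt.prodMk (Complex.reCLM.hasFDerivAt.comp z hf')
    (HasFDerivAt.prodMk (Complex.imCLM.hasFDerivAt.comp z hf') (Complex.reCLM.hasFDerivAt.comp z hg')))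


/-- For the Weierstrass data φ = (F, −iF, −F/G) (i.e. x = (Re h₁, Im h₁, Re h₃) with
h₁' = F, h₃' = −F/G and G nowhere zero), at every z₀ with F(z₀) ≠ 0 one has
g₁₁ = g₂₂ = |F|², g₁₂ = 0, and K = −|G'/(F·G²)|². -/
theorem stmt16 (U : Set ℂ) (hU : IsOpen U) (F G h₁ h₃ : ℂ → ℂ)
    (hF : DifferentiableOn ℂ F U) (hG : DifferentiableOn ℂ G U)
    (hGne : ∀ z ∈ U, G z ≠ 0)
    (hh₁ : ∀ z ∈ U, HasDerivAt h₁ (F z) z)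
    (hh₃ : ∀ z ∈ U, HasDerivAt h₃ (-(F z / G z)) z) :
    ∀ z₀ ∈ U, F z₀ ≠ 0 →
      g11 (fun w => ((h₁ w).re, (h₁ w).im, (h₃ w).re)) z₀ = ‖F z₀‖ ^ 2 ∧
      g22 (fun w => ((h₁ w).re, (h₁ w).im, (h₃ w).re)) z₀ = ‖F z₀‖ ^ 2 ∧
      g12 (fun w => ((h₁ w).re, (h₁ w).im, (h₃ w).re)) z₀ = 0 ∧
      Kcurv (fun w => ((h₁ w).re, (h₁ w).im, (h₃ w).re)) z₀ =
        -(‖deriv G z₀ / (F z₀ * (G z₀) ^ 2)‖ ^ 2) := by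
  intro z₀ hz₀ hFne
  set x : ℂ → ℝ × ℝ × ℝ := fun w => ((h₁ w).re, (h₁ w).im, (h₃ w).re) with hxdef
  have hmem : U ∈ nhds z₀ := hU.mem_nhds hz₀
  have hFz : ∀ z ∈ U, HasDerivAt F (deriv F z) z := fun z hz =>
    ((hF z hz).differentiableAt (hU.mem_nhds hz)).hasDerivAt
  have hGz : ∀ z ∈ U, HasDerivAt G (deriv G z) z := fun z hz =>
    ((hG z hz).differentiableAt (hU.mem_nhds hz)).hasDerivAt
  have hq : ∀ z ∈ U, HasDerivAt (fun w => F w / G w)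
      ((deriv F z * G z - F z * deriv G z) / G z ^ 2) z := fun z hz =>
    (hFz z hz).div (hGz z hz) (hGne z hz)
  have hxd : ∀ z ∈ U, HasFDerivAt x (LmapD (F z) (-(F z / G z))) z := fun z hz =>
    hasFDerivAt_E (hh₁ z hz) (hh₃ z hz)
  have hdu : ∀ z ∈ U, du x z = ((F z).re, (F z).im, (-(F z / G z)).re) := fun z hz => by
    rw [du, (hxd z hz).fderiv, LmapD_apply, one_mul, one_mul]
  have hdv : ∀ z ∈ U, dv x z =
      ((Complex.I * F z).re, (Complex.I * F z).im, (Complex.I * -(F z / G z)).re) := fun z hz => by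
    rw [dv, (hxd z hz).fderiv, LmapD_apply]
  set q' : ℂ := (deriv F z₀ * G z₀ - F z₀ * deriv G z₀) / G z₀ ^ 2 with hq'def
  have hduE : du x =ᶠ[nhds z₀] fun w => ((F w).re, (F w).im, ((-(F w / G w))).re) :=
    Filter.eventuallyEq_of_mem hmem hdu
  have hdvE : dv x =ᶠ[nhds z₀] fun w =>
      ((Complex.I * F w).re, (Complex.I * F w).im, ((Complex.I * -(F w / G w))).re) :=
    Filter.eventuallyEq_of_mem hmem hdv
  have h2a : HasFDerivAt (fun w => ((F w).re, (F w).im, ((-(F w / G w))).re))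
      (LmapD (deriv F z₀) (-q')) z₀ := hasFDerivAt_E (hFz z₀ hz₀) ((hq z₀ hz₀).neg)
  have h2b : HasFDerivAt (fun w =>
      ((Complex.I * F w).re, (Complex.I * F w).im, ((Complex.I * -(F w / G w))).re))
      (LmapD (Complex.I * deriv F z₀) (Complex.I * -q')) z₀ :=
    hasFDerivAt_E ((hFz z₀ hz₀).const_mul Complex.I) (((hq z₀ hz₀).neg).const_mul Complex.I)
  have hdudu : du (du x) z₀ = ((deriv F z₀).re, (deriv F z₀).im, (-q').re) := by
    rw [du, hduE.fderiv_eq, h2a.fderiv, LmapD_apply, one_mul, one_mul]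
  have hdudv : du (dv x) z₀ =
      ((Complex.I * deriv F z₀).re, (Complex.I * deriv F z₀).im, (Complex.I * -q').re) := by
    rw [du, hdvE.fderiv_eq, h2b.fderiv, LmapD_apply, one_mul, one_mul]
  have hdvdv : dv (dv x) z₀ =
      ((Complex.I * (Complex.I * deriv F z₀)).re, (Complex.I * (Complex.I * deriv F z₀)).im,
       (Complex.I * (Complex.I * -q')).re) := by
    rw [dv, hdvE.fderiv_eq, h2b.fderiv, LmapD_apply]
  have hnF : Complex.normSq (F z₀) ≠ 0 := (Complex.normSq_pos.mpr hFne).ne'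
  have hnG : Complex.normSq (G z₀) ≠ 0 := (Complex.normSq_pos.mpr (hGne z₀ hz₀)).ne'
  have hnF' : (F z₀).re * (F z₀).re + (F z₀).im * (F z₀).im ≠ 0 := by
    simpa [Complex.normSq_apply] using hnF
  have hnG' : (G z₀).re * (G z₀).re + (G z₀).im * (G z₀).im ≠ 0 := by
    simpa [Complex.normSq_apply] using hnG
  have hF2 : (F z₀).re ^ 2 + (F z₀).im ^ 2 ≠ 0 := by simpa [sq] using hnF'
  have hG2 : (G z₀).re ^ 2 + (G z₀).im ^ 2 ≠ 0 := by simpa [sq] using hnG'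
  have hF3 : (F z₀).im ^ 2 + (F z₀).re ^ 2 ≠ 0 := by rwa [add_comm]
  set c : ℂ := F z₀ * deriv G z₀ / G z₀ ^ 2 with hcdef
  have hG11 : g11 x z₀ = Complex.normSq (F z₀) := by
    rw [g11, isoInner, hdu z₀ hz₀, Complex.normSq_apply]
  have hG22 : g22 x z₀ = Complex.normSq (F z₀) := by
    rw [g22, isoInner, hdv z₀ hz₀, Complex.normSq_apply]
    simp [Complex.mul_re, Complex.mul_im]
    ring
  have hG12 : g12 x z₀ = 0 := by
    rw [g12, isoInner, hdu z₀ hz₀, hdv z₀ hz₀]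
    simp [Complex.mul_re, Complex.mul_im]
    ring
  have hNm : Nm x z₀ =
      ((G z₀).re / Complex.normSq (G z₀), (G z₀).im / Complex.normSq (G z₀), 1) := by
    rw [Nm, hdu z₀ hz₀, hdv z₀ hz₀, cross3]
    simp only [Complex.mul_re, Complex.mul_im, Complex.neg_re, Complex.neg_im,
      Complex.div_re, Complex.div_im, Complex.I_re, Complex.I_im, Complex.normSq_apply,
      zero_mul, mul_zero, one_mul, mul_one, zero_add, add_zero, zero_sub, sub_zero, neg_neg,
      neg_mul, mul_neg]
    refine Prod.ext ?_ (Prod.ext ?_ rfl) <;> (field_simp; ring_nf; field_simp)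
  have hH11 : h11 x z₀ = c.re := by
    rw [h11, hdudu, hNm, dot3, hcdef]
    simp only [hq'def, pow_two, Complex.neg_re, Complex.neg_im, Complex.div_re, Complex.div_im,
      Complex.mul_re, Complex.mul_im, Complex.sub_re, Complex.sub_im, Complex.normSq_apply,
      map_mul, mul_one]
    field_simp
    ring
  have hH12 : h12 x z₀ = -c.im := by
    rw [h12, hdudv, hNm, dot3, hcdef]
    simp only [hq'def, pow_two, Complex.neg_re, Complex.neg_im, Complex.div_re, Complex.div_im,
      Complex.mul_re, Complex.mul_im, Complex.sub_re, Complex.sub_im, Complex.normSq_apply,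
      map_mul, mul_one, Complex.I_re, Complex.I_im,
      zero_mul, mul_zero, one_mul, zero_add, add_zero, zero_sub, sub_zero, neg_neg,
      neg_mul, mul_neg]
    field_simp
    ring
  have hH22 : h22 x z₀ = -c.re := by
    rw [h22, hdvdv, hNm, dot3, hcdef]
    simp only [hq'def, pow_two, Complex.neg_re, Complex.neg_im, Complex.div_re, Complex.div_im,
      Complex.mul_re, Complex.mul_im, Complex.sub_re, Complex.sub_im, Complex.normSq_apply,
      map_mul, mul_one, Complex.I_re, Complex.I_im,
      zero_mul, mul_zero, one_mul, zero_add, add_zero, zero_sub, sub_zero, neg_neg,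
      neg_mul, mul_neg]
    field_simp
    ring
  refine ⟨by rw [hG11, Complex.sq_norm], by rw [hG22, Complex.sq_norm],
    hG12, ?_⟩
  rw [Kcurv, hH11, hH12, hH22, hG11, hG22, hG12, Complex.sq_norm]
  have hnum : c.re * -c.re - (-c.im) ^ 2 = -Complex.normSq c := by
    rw [Complex.normSq_apply]; ring
  rw [hnum, hcdef, map_div₀, map_div₀, map_mul, map_mul, map_pow]
  field_simp
  ring
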